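/- Let H : ℂ → ℂ be continuous and let δ₁(w) = a₁ + b₁·w and δ₂(w) = a₂ + b₂·w be affine maps of ℂ with b₁ ≠ 0 and b₂ ≠ 0. Then the extension operation is affinely natural: v_{δ₁∘H∘δ₂}(w,t) = |b₁| · v_H(δ₂(w), |b₂|·t) for all (w,t) ∈ ℂ × [0,∞), and consequently e(δ₁ ∘ H ∘ δ₂) = e(δ₁) ∘ e(H) ∘ e(δ₂) as maps of ℂ × [0,∞). -/

import Mathlib

/-- `v_H(w,t) = max_{|W| = t} |H(w+W) - H(w)|`, realized as the supremum of the
(compact, hence bounded) image of the circle of radius `t`. -/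
noncomputable def vmax (H : ℂ → ℂ) (w : ℂ) (t : ℝ) : ℝ :=
  sSup ((fun W => ‖H (w + W) - H w‖) '' Metric.sphere (0 : ℂ) t)

/-- The extension `e(H)(w,t) = (H(w), v_H(w,t))` of `H` to `ℂ × [0,∞)`. -/
noncomputable def extMap (H : ℂ → ℂ) : ℂ × ℝ → ℂ × ℝ :=
  fun p => (H p.1, vmax H p.1 p.2)

lemma sphere_smul (b : ℂ) (hb : b ≠ 0) (t : ℝ) :
    Metric.sphere (0 : ℂ) (‖b‖ * t) = (fun W => b * W) '' Metric.sphere (0 : ℂ) t := by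
  ext W
  simp only [Metric.mem_sphere, dist_zero_right, Set.mem_image]
  constructor
  · intro h
    refine ⟨b⁻¹ * W, ?_, by field_simp⟩
    rw [norm_mul, norm_inv, h, ← mul_assoc,
      inv_mul_cancel₀ (by simpa using hb), one_mul]
  · rintro ⟨x, hx, rfl⟩
    rw [norm_mul, ← hx]

lemma vmax_key (H : ℂ → ℂ) (a₁ b₁ a₂ b₂ : ℂ) (hb₂ : b₂ ≠ 0) (w : ℂ) (t : ℝ) :
    vmax (fun z => a₁ + b₁ * H (a₂ + b₂ * z)) w t
      = ‖b₁‖ * vmax H (a₂ + b₂ * w) (‖b₂‖ * t) := by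
  unfold vmax
  rw [← smul_eq_mul, ← Real.sSup_smul_of_nonneg (by positivity)]
  congr 1
  rw [sphere_smul b₂ hb₂ t, Set.image_image, ← Set.image_smul, Set.image_image]
  apply Set.image_congr'
  intro W
  simp only [smul_eq_mul]
  rw [← norm_mul]
  ring_nf

lemma vmax_nonneg (H : ℂ → ℂ) (hH : Continuous H) (w : ℂ) (t : ℝ) (ht : 0 ≤ t) :
    0 ≤ vmax H w t := by
  have hne : (Metric.sphere (0 : ℂ) t).Nonempty := NormedSpace.sphere_nonempty.2 ht
  obtain ⟨W, hW⟩ := hne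
  have hbdd : BddAbove ((fun W => ‖H (w + W) - H w‖) '' Metric.sphere (0 : ℂ) t) :=
    ((isCompact_sphere 0 t).image (by continuity)).bddAbove
  exact le_trans (norm_nonneg _) (le_csSup hbdd ⟨W, hW, rfl⟩)

lemma vmax_affine (a b : ℂ) (w : ℂ) (t : ℝ) (ht : 0 ≤ t) :
    vmax (fun z => a + b * z) w t = ‖b‖ * t := by
  unfold vmax
  have : ((fun W => ‖(a + b * (w + W)) - (a + b * w)‖) '' Metric.sphere (0 : ℂ) t)
      = {‖b‖ * t} := by
    have hne : (Metric.sphere (0 : ℂ) t).Nonempty := NormedSpace.sphere_nonempty.2 ht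
    apply Set.eq_singleton_iff_nonempty_unique_mem.2
    refine ⟨hne.image _, ?_⟩
    rintro x ⟨W, hW, rfl⟩
    simp only [Metric.mem_sphere, dist_zero_right] at hW
    show ‖(a + b * (w + W)) - (a + b * w)‖ = _
    rw [show (a + b * (w + W)) - (a + b * w) = b * W by ring, norm_mul, hW]
  rw [this, csSup_singleton]

/-- Affine naturality of the extension: for affine `δ₁(w) = a₁ + b₁w`,
`δ₂(w) = a₂ + b₂w` with `b₁, b₂ ≠ 0`, one has
`v_{δ₁∘H∘δ₂}(w,t) = |b₁|·v_H(δ₂ w, |b₂| t)` and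
`e(δ₁ ∘ H ∘ δ₂) = e(δ₁) ∘ e(H) ∘ e(δ₂)` on `ℂ × [0,∞)`. -/
theorem extMap_affinely_natural (H : ℂ → ℂ) (hH : Continuous H)
    (a₁ b₁ a₂ b₂ : ℂ) (hb₁ : b₁ ≠ 0) (hb₂ : b₂ ≠ 0) :
    (∀ (w : ℂ) (t : ℝ), 0 ≤ t →
      vmax (fun z => a₁ + b₁ * H (a₂ + b₂ * z)) w t
        = ‖b₁‖ * vmax H (a₂ + b₂ * w) (‖b₂‖ * t)) ∧
    (∀ (w : ℂ) (t : ℝ), 0 ≤ t →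
      extMap (fun z => a₁ + b₁ * H (a₂ + b₂ * z)) (w, t)
        = extMap (fun z => a₁ + b₁ * z)
            (extMap H (extMap (fun z => a₂ + b₂ * z) (w, t)))) := by
  refine ⟨fun w t ht => vmax_key H a₁ b₁ a₂ b₂ hb₂ w t, fun w t ht => ?_⟩
  simp only [extMap, vmax_affine a₂ b₂ w t ht,
    vmax_affine a₁ b₁ (H (a₂ + b₂ * w)) (vmax H (a₂ + b₂ * w) (‖b₂‖ * t))
      (vmax_nonneg H hH _ _ (mul_nonneg (norm_nonneg _) ht)),
    vmax_key H a₁ b₁ a₂ b₂ hb₂ w t]
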